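/- On U = {(x,y) ∈ ℝ² : y ≠ 0}, the vector fields X₁ = (1,0), X₂ = (x,y), X₃ = (x²−y², 2xy) (the class P₂ ≅ sl(2), arising from planar/complex Riccati equations) are Hamiltonian with respect to the symplectic form ω = y^{−2} dx∧dy with Hamiltonian functions h₁ = −1/y, h₂ = −x/y, h₃ = −(x²+y²)/y, respectively (i.e. ∂h_i/∂x = −y^{−2}·X_i² and ∂h_i/∂y = y^{−2}·X_i¹). Moreover, under the Poisson bracket {g,h}_ω = y²(∂g/∂x·∂h/∂y − ∂g/∂y·∂h/∂x) these satisfy {h₁,h₂}_ω = −h₁, {h₁,h₃}_ω = −2h₂, {h₂,h₃}_ω = −h₃, so ⟨h₁,h₂,h₃⟩ is a Lie algebra isomorphic to sl(2). -/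

import Mathlib

namespace Stmt7

/-- Partial derivative in the x-direction. -/
noncomputable def pdx (f : ℝ × ℝ → ℝ) (p : ℝ × ℝ) : ℝ := fderiv ℝ f p (1, 0)

/-- Partial derivative in the y-direction. -/
noncomputable def pdy (f : ℝ × ℝ → ℝ) (p : ℝ × ℝ) : ℝ := fderiv ℝ f p (0, 1)

/-- Poisson bracket induced by ω = y⁻² dx∧dy. -/
noncomputable def pbw (g h : ℝ × ℝ → ℝ) (p : ℝ × ℝ) : ℝ :=
  p.2 ^ 2 * (pdx g p * pdy h p - pdy g p * pdx h p)

/-- Domain: the plane minus the x-axis. -/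
def U : Set (ℝ × ℝ) := {p | p.2 ≠ 0}

/-- Basis of the class P₂ ≅ sl(2) (planar/complex Riccati equations). -/
def X1 : ℝ × ℝ → ℝ × ℝ := fun _ => (1, 0)
def X2 : ℝ × ℝ → ℝ × ℝ := fun p => (p.1, p.2)
def X3 : ℝ × ℝ → ℝ × ℝ := fun p => (p.1 ^ 2 - p.2 ^ 2, 2 * p.1 * p.2)

noncomputable def h1 : ℝ × ℝ → ℝ := fun p => -(1 / p.2)
noncomputable def h2 : ℝ × ℝ → ℝ := fun p => -(p.1 / p.2)
noncomputable def h3 : ℝ × ℝ → ℝ := fun p => -((p.1 ^ 2 + p.2 ^ 2) / p.2)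

/-- On {y ≠ 0}, the fields X₁, X₂, X₃ of P₂ ≅ sl(2) are Hamiltonian with respect to
ω = y⁻² dx∧dy with Hamiltonian functions h₁, h₂, h₃, which close sl(2) under the
induced Poisson bracket. -/
theorem stmt_7 : ∀ p ∈ U,
    (pdx h1 p = -((p.2 ^ 2)⁻¹ * (X1 p).2) ∧ pdy h1 p = (p.2 ^ 2)⁻¹ * (X1 p).1) ∧
    (pdx h2 p = -((p.2 ^ 2)⁻¹ * (X2 p).2) ∧ pdy h2 p = (p.2 ^ 2)⁻¹ * (X2 p).1) ∧
    (pdx h3 p = -((p.2 ^ 2)⁻¹ * (X3 p).2) ∧ pdy h3 p = (p.2 ^ 2)⁻¹ * (X3 p).1) ∧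
    pbw h1 h2 p = -h1 p ∧ pbw h1 h3 p = -2 * h2 p ∧ pbw h2 h3 p = -h3 p := by
  rintro ⟨x, y⟩ hy
  replace hy : y ≠ 0 := hy
  have hx1 : HasFDerivAt (fun p : ℝ × ℝ => p.1) (ContinuousLinearMap.fst ℝ ℝ ℝ) (x, y) :=
    hasFDerivAt_fst
  have hx2 : HasFDerivAt (fun p : ℝ × ℝ => p.2) (ContinuousLinearMap.snd ℝ ℝ ℝ) (x, y) :=
    hasFDerivAt_snd
  have hinv : HasFDerivAt (fun p : ℝ × ℝ => (p.2)⁻¹)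
      ((ContinuousLinearMap.smulRight (1 : ℝ →L[ℝ] ℝ) (-(y ^ 2)⁻¹)).comp
        (ContinuousLinearMap.snd ℝ ℝ ℝ)) (x, y) :=
    (hasFDerivAt_inv hy).comp (x, y) hx2
  have heq1 : h1 = fun p : ℝ × ℝ => -(p.2)⁻¹ := by funext p; simp [h1, one_div]
  have heq2 : h2 = fun p : ℝ × ℝ => -(p.1 * (p.2)⁻¹) := by
    funext p; simp [h2, div_eq_mul_inv]
  have heq3 : h3 = fun p : ℝ × ℝ => -((p.1 * p.1 + p.2 * p.2) * (p.2)⁻¹) := by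
    funext p; show -((p.1 ^ 2 + p.2 ^ 2) / p.2) = _; rw [div_eq_mul_inv]; ring
  have e1 : fderiv ℝ h1 (x, y) = _ := (by rw [heq1]; exact hinv.neg : HasFDerivAt h1 (-((ContinuousLinearMap.smulRight (1 : ℝ →L[ℝ] ℝ) (-(y ^ 2)⁻¹)).comp (ContinuousLinearMap.snd ℝ ℝ ℝ))) (x, y)).fderiv
  have e2 : fderiv ℝ h2 (x, y) = _ := ((show h2 = -((fun p : ℝ × ℝ => p.1) * fun p : ℝ × ℝ => p.2⁻¹) from heq2) ▸ (hx1.mul hinv).neg :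
      HasFDerivAt h2 _ (x, y)).fderiv
  have e3 : fderiv ℝ h3 (x, y) = _ :=
    ((show h3 = -((((fun p : ℝ × ℝ => p.1) * fun p : ℝ × ℝ => p.1) + (fun p : ℝ × ℝ => p.2) * fun p : ℝ × ℝ => p.2) * fun p : ℝ × ℝ => p.2⁻¹) from heq3) ▸
      (((hx1.mul hx1).add (hx2.mul hx2)).mul hinv).neg : HasFDerivAt h3 _ (x, y)).fderiv
  have px1 : pdx h1 (x, y) = 0 := by simp [pdx, e1]
  have py1 : pdy h1 (x, y) = (y ^ 2)⁻¹ := by simp [pdy, e1]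
  have px2 : pdx h2 (x, y) = -y⁻¹ := by simp [pdx, e2]
  have py2 : pdy h2 (x, y) = x * (y ^ 2)⁻¹ := by simp [pdy, e2]; try ring
  have px3 : pdx h3 (x, y) = -(2 * x * y⁻¹) := by
    simp [pdx, e3]; try ring
  have py3 : pdy h3 (x, y) = (x ^ 2 + y ^ 2) * (y ^ 2)⁻¹ - 2 := by
    simp [pdy, e3]; field_simp; try ring
  refine ⟨⟨?_, ?_⟩, ⟨?_, ?_⟩, ⟨?_, ?_⟩, ?_, ?_, ?_⟩ <;>
    simp only [pbw, px1, py1, px2, py2, px3, py3, X1, X2, X3, h1, h2, h3] <;>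
    field_simp <;> ring
end Stmt7
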